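/- The t-product corresponds to slice-wise matrix multiplication in the Fourier domain: for tensors A ∈ ℂ^{n1×n2×n3} and B ∈ ℂ^{n2×n4×n3}, if C = A * B then for every k, C̄^{(k)} = Ā^{(k)} B̄^{(k)}, where X̄^{(k)} denotes the k-th frontal slice of the DFT of X along the third dimension. -/

import Mathlib

open Matrix Complex

/-- The t-th frontal slice of a complex third-order tensor. -/
def fSlice {n1 n2 n3 : ℕ} (A : Fin n1 → Fin n2 → Fin n3 → ℂ) (t : Fin n3) :
    Matrix (Fin n1) (Fin n2) ℂ :=
  fun i j => A i j t

/-- The t-product of complex third-order tensors: slice-wise circular convolution. -/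
noncomputable def tProd {n1 n2 n4 n3 : ℕ} (A : Fin n1 → Fin n2 → Fin n3 → ℂ)
    (B : Fin n2 → Fin n4 → Fin n3 → ℂ) : Fin n1 → Fin n4 → Fin n3 → ℂ :=
  fun i j k => ∑ t : Fin n3, (fSlice A (k - t) * fSlice B t) i j

/-- The k-th frontal slice of the DFT along the third dimension. -/
noncomputable def fourierSlice {n1 n2 n3 : ℕ} (A : Fin n1 → Fin n2 → Fin n3 → ℂ)
    (k : Fin n3) : Matrix (Fin n1) (Fin n2) ℂ :=
  fun i j => ∑ t : Fin n3,
    A i j t * Complex.exp (-2 * Real.pi * Complex.I / n3) ^ ((t : ℕ) * (k : ℕ))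

/-- The t-product becomes slice-wise matrix multiplication in the Fourier domain. -/
theorem fourierSlice_tProd {n1 n2 n4 n3 : ℕ}
    (A : Fin n1 → Fin n2 → Fin n3 → ℂ) (B : Fin n2 → Fin n4 → Fin n3 → ℂ)
    (k : Fin n3) :
    fourierSlice (tProd A B) k = fourierSlice A k * fourierSlice B k := by
  have hn : n3 ≠ 0 := k.pos.ne'
  haveI : NeZero n3 := ⟨hn⟩
  set ω : ℂ := Complex.exp (-2 * Real.pi * Complex.I / n3) with hω
  have hω1 : ω ^ n3 = 1 := by
    rw [hω, ← Complex.exp_nat_mul]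
    have h3 : (n3 : ℂ) ≠ 0 := Nat.cast_ne_zero.mpr hn
    rw [mul_div_cancel₀ _ h3]
    simpa using Complex.exp_int_mul_two_pi_mul_I (-1)
  have hmod : ∀ a : ℕ, ω ^ a = ω ^ (a % n3) := by
    intro a
    conv_lhs => rw [← Nat.mod_add_div a n3]
    rw [pow_add, pow_mul, hω1, one_pow, mul_one]
  have key : ∀ s t : Fin n3, ω ^ (((s + t : Fin n3) : ℕ) * (k : ℕ))
      = ω ^ ((s : ℕ) * (k : ℕ)) * ω ^ ((t : ℕ) * (k : ℕ)) := by
    intro s t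
    rw [pow_mul, Fin.val_add, ← hmod, ← pow_mul, ← pow_add, ← add_mul]
  funext i j
  simp only [fourierSlice, tProd, fSlice, Matrix.mul_apply, Finset.sum_mul, Finset.mul_sum]
  rw [← hω]
  have L : (∑ u : Fin n3, ∑ t : Fin n3, ∑ m : Fin n2,
        A i m (u - t) * B m j t * ω ^ ((u : ℕ) * (k : ℕ)))
      = ∑ p : Fin n3 × Fin n3 × Fin n2,
        A i p.2.2 (p.1 - p.2.1) * B p.2.2 j p.2.1 * ω ^ ((p.1 : ℕ) * (k : ℕ)) := by
    rw [Fintype.sum_prod_type]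
    exact Finset.sum_congr rfl fun u _ => by rw [Fintype.sum_prod_type]
  have R : (∑ m : Fin n2, ∑ t : Fin n3, ∑ s : Fin n3,
        A i m s * ω ^ ((s : ℕ) * (k : ℕ)) * (B m j t * ω ^ ((t : ℕ) * (k : ℕ))))
      = ∑ q : Fin n2 × Fin n3 × Fin n3,
        A i q.1 q.2.2 * ω ^ ((q.2.2 : ℕ) * (k : ℕ))
          * (B q.1 j q.2.1 * ω ^ ((q.2.1 : ℕ) * (k : ℕ))) := by
    rw [Fintype.sum_prod_type]
    exact Finset.sum_congr rfl fun m _ => by rw [Fintype.sum_prod_type]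
  rw [L, R]
  refine Fintype.sum_equiv
    ⟨fun p => (p.2.2, p.2.1, p.1 - p.2.1), fun q => (q.2.2 + q.2.1, q.2.1, q.1),
      fun p => by dsimp only; rw [sub_add_cancel], fun q => by dsimp only; rw [add_sub_cancel_right]⟩
    _ _ fun p => ?_
  simp only [Equiv.coe_fn_mk]
  have hu : p.1 = (p.1 - p.2.1) + p.2.1 := (sub_add_cancel _ _).symm
  rw [hu, key]
  rw [add_sub_cancel_right]
  ring
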